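/- The final size equation 0 = I₀ + S₀(1 − exp(−τ𝓘∞)) − ν𝓘∞ has a unique positive solution 𝓘∞ > 0, and 𝓘∞ is the limit as t → ∞ of the solution of 𝓘'(t) = I₀ + S₀(1 − exp(−τ𝓘(t))) − ν𝓘(t), 𝓘(t₀) = 0. -/

import Mathlib

open Filter Set

/-- The nonlinear map in the final size equation. -/
private noncomputable def gFun (I₀ S₀ τ ν x : ℝ) : ℝ :=
  I₀ + S₀ * (1 - Real.exp (-τ * x)) - ν * x

private lemma gFun_zero (I₀ S₀ τ ν : ℝ) : gFun I₀ S₀ τ ν 0 = I₀ := by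
  simp [gFun]

private lemma gFun_cont (I₀ S₀ τ ν : ℝ) : Continuous (gFun I₀ S₀ τ ν) := by
  unfold gFun; continuity

/-- Concavity inequality for `gFun`. -/
private lemma gFun_combo (I₀ S₀ τ ν : ℝ) (hS₀ : 0 < S₀) {y μ : ℝ}
    (h0 : 0 ≤ μ) (h1 : μ ≤ 1) :
    (1 - μ) * I₀ + μ * gFun I₀ S₀ τ ν y ≤ gFun I₀ S₀ τ ν (μ * y) := by
  have hexp := convexOn_exp.2 (Set.mem_univ (0:ℝ)) (Set.mem_univ (-τ * y))
    (by linarith : (0:ℝ) ≤ 1 - μ) h0 (by ring)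
  simp only [smul_eq_mul, mul_zero, zero_add, Real.exp_zero, mul_one] at hexp
  unfold gFun
  have hrw : -τ * (μ * y) = μ * (-τ * y) := by ring
  rw [hrw]
  nlinarith [hexp]

/-- Lower bound for `gFun` on `[0, Iinf]` when `Iinf` is a root. -/
private lemma gFun_lower (I₀ S₀ τ ν Iinf : ℝ) (hS₀ : 0 < S₀) (hIinf : 0 < Iinf)
    (hroot : gFun I₀ S₀ τ ν Iinf = 0) {x : ℝ} (hx0 : 0 ≤ x) (hx1 : x ≤ Iinf) :
    (1 - x / Iinf) * I₀ ≤ gFun I₀ S₀ τ ν x := by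
  have hμ0 : 0 ≤ x / Iinf := div_nonneg hx0 hIinf.le
  have hμ1 : x / Iinf ≤ 1 := (div_le_one hIinf).2 hx1
  have h := gFun_combo I₀ S₀ τ ν hS₀ (y := Iinf) hμ0 hμ1
  rw [hroot, mul_zero, add_zero, div_mul_cancel₀ _ hIinf.ne'] at h
  exact h

/-- `gFun` is negative above the root. -/
private lemma gFun_neg (I₀ S₀ τ ν Iinf : ℝ) (hI₀ : 0 < I₀) (hS₀ : 0 < S₀)
    (hIinf : 0 < Iinf) (hroot : gFun I₀ S₀ τ ν Iinf = 0) {x : ℝ} (hx : Iinf < x) :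
    gFun I₀ S₀ τ ν x < 0 := by
  have hx0 : 0 < x := hIinf.trans hx
  have hμ0 : 0 ≤ Iinf / x := div_nonneg hIinf.le hx0.le
  have hμ1 : Iinf / x ≤ 1 := (div_le_one hx0).2 hx.le
  have hμlt : Iinf / x < 1 := (div_lt_one hx0).2 hx
  have hμpos : 0 < Iinf / x := div_pos hIinf hx0
  have h := gFun_combo I₀ S₀ τ ν hS₀ (y := x) hμ0 hμ1
  rw [div_mul_cancel₀ _ hx0.ne', hroot] at h
  nlinarith

/-- The main ODE convergence lemma. -/
private lemma tendsto_root (I₀ S₀ τ ν t₀ Iinf : ℝ)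
    (hI₀ : 0 < I₀) (hS₀ : 0 < S₀) (hτ : 0 < τ) (hν : 0 < ν)
    (hIinf : 0 < Iinf) (hroot : gFun I₀ S₀ τ ν Iinf = 0)
    (𝓘 : ℝ → ℝ) (h0 : 𝓘 t₀ = 0)
    (hD : ∀ t : ℝ, t₀ ≤ t → HasDerivAt 𝓘 (gFun I₀ S₀ τ ν (𝓘 t)) t) :
    Tendsto 𝓘 atTop (nhds Iinf) := by
  set g := gFun I₀ S₀ τ ν with hg
  -- continuity of 𝓘 on [t₀, ∞)
  have hIc : ContinuousOn 𝓘 (Ici t₀) := fun t ht =>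
    (hD t ht).continuousAt.continuousWithinAt
  -- a δ > 0 with g > 0 on [-δ, 0]
  obtain ⟨δ, hδpos, hδ⟩ : ∃ δ > 0, ∀ x : ℝ, -δ ≤ x → x ≤ 0 → 0 < g x := by
    have hcg : ContinuousAt g 0 := (gFun_cont I₀ S₀ τ ν).continuousAt
    have hmem : g ⁻¹' Ioi 0 ∈ nhds (0:ℝ) := by
      apply hcg
      rw [hg, gFun_zero]
      exact Ioi_mem_nhds hI₀
    obtain ⟨ε, hε, hball⟩ := Metric.mem_nhds_iff.1 hmem
    refine ⟨ε / 2, by positivity, fun x hx1 hx2 => ?_⟩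
    have : x ∈ Metric.ball (0:ℝ) ε := by
      rw [Metric.mem_ball, Real.dist_eq, sub_zero, abs_lt]
      constructor <;> linarith
    exact hball this
  -- upper invariance
  have hup : ∀ t, t₀ ≤ t → 𝓘 t ≤ Iinf := by
    by_contra hcon
    push_neg at hcon
    obtain ⟨t₁, ht₁, hgt⟩ := hcon
    have ht01 : t₀ < t₁ := by
      rcases eq_or_lt_of_le ht₁ with h | h
      · rw [← h, h0] at hgt; linarith
      · exact h
    set s : Set ℝ := Icc t₀ t₁ ∩ 𝓘 ⁻¹' Iic Iinf with hs
    have hsc : IsClosed s :=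
      (hIc.mono Icc_subset_Ici_self).preimage_isClosed_of_isClosed isClosed_Icc isClosed_Iic
    have hsne : s.Nonempty := ⟨t₀, ⟨le_refl _, ht01.le⟩, by simp [h0, hIinf.le]⟩
    have hsbdd : BddAbove s := (bddAbove_Icc).mono inter_subset_left
    set T := sSup s with hT
    have hTs : T ∈ s := hsc.csSup_mem hsne hsbdd
    have hTt₁ : T < t₁ := by
      rcases lt_or_eq_of_le hTs.1.2 with h | h
      · exact h
      · exfalso; have := hTs.2; rw [h] at this; simp at this; linarith
    have hgtT : ∀ t ∈ Ioc T t₁, Iinf < 𝓘 t := by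
      intro t ht
      by_contra hle
      push_neg at hle
      have : t ∈ s := ⟨⟨hTs.1.1.trans ht.1.le, ht.2⟩, hle⟩
      exact absurd (le_csSup hsbdd this) (not_le.2 ht.1)
    have hanti : StrictAntiOn 𝓘 (Icc T t₁) := by
      apply strictAntiOn_of_deriv_neg (convex_Icc _ _)
        (hIc.mono (Icc_subset_Ici_self.trans (Ici_subset_Ici.2 hTs.1.1)))
      · intro x hx
        rw [interior_Icc] at hx
        have hxt₀ : t₀ ≤ x := hTs.1.1.trans hx.1.le
        rw [(hD x hxt₀).deriv]
        exact gFun_neg I₀ S₀ τ ν Iinf hI₀ hS₀ hIinf hroot (hgtT x ⟨hx.1, hx.2.le⟩)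
    have := hanti (left_mem_Icc.2 hTt₁.le) (right_mem_Icc.2 hTt₁.le) hTt₁
    have hTle : 𝓘 T ≤ Iinf := hTs.2
    linarith
  -- lower invariance
  have hlo : ∀ t, t₀ ≤ t → 0 ≤ 𝓘 t := by
    by_contra hcon
    push_neg at hcon
    obtain ⟨t₁, ht₁, hneg⟩ := hcon
    have ht01 : t₀ < t₁ := by
      rcases eq_or_lt_of_le ht₁ with h | h
      · rw [← h, h0] at hneg; linarith
      · exact h
    -- choose t₂ ∈ (t₀, t₁] with 𝓘 t₂ < 0 and 𝓘 t > -δ/2 for t ∈ [t₀, t₂)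
    obtain ⟨t₂, ht₂mem, ht₂neg, hupδ⟩ :
        ∃ t₂, t₂ ∈ Icc t₀ t₁ ∧ 𝓘 t₂ < 0 ∧ ∀ t, t₀ ≤ t → t < t₂ → -(δ/2) < 𝓘 t := by
      set s₂ : Set ℝ := Icc t₀ t₁ ∩ 𝓘 ⁻¹' Iic (-(δ/2)) with hs₂
      by_cases hne : s₂.Nonempty
      · have hsc : IsClosed s₂ :=
          (hIc.mono Icc_subset_Ici_self).preimage_isClosed_of_isClosed isClosed_Icc isClosed_Iic
        have hbdd : BddBelow s₂ := (bddBelow_Icc).mono inter_subset_left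
        set t₂ := sInf s₂ with ht₂
        have hmem : t₂ ∈ s₂ := hsc.csInf_mem hne hbdd
        refine ⟨t₂, hmem.1, by have := hmem.2; simp at this; linarith, ?_⟩
        intro t htt₀ htlt
        by_contra hle
        push_neg at hle
        have : t ∈ s₂ := ⟨⟨htt₀, htlt.le.trans hmem.1.2⟩, hle⟩
        exact absurd (csInf_le hbdd this) (not_le.2 htlt)
      · refine ⟨t₁, right_mem_Icc.2 ht01.le, hneg, ?_⟩
        intro t htt₀ htlt
        by_contra hle
        push_neg at hle
        exact hne ⟨t, ⟨htt₀, htlt.le⟩, hle⟩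
    set s : Set ℝ := Icc t₀ t₂ ∩ 𝓘 ⁻¹' Ici 0 with hs
    have hsc : IsClosed s :=
      (hIc.mono Icc_subset_Ici_self).preimage_isClosed_of_isClosed isClosed_Icc isClosed_Ici
    have hsne : s.Nonempty := ⟨t₀, ⟨le_refl _, ht₂mem.1⟩, by simp [h0]⟩
    have hsbdd : BddAbove s := (bddAbove_Icc).mono inter_subset_left
    set T := sSup s with hT
    have hTs : T ∈ s := hsc.csSup_mem hsne hsbdd
    have hTt₂ : T < t₂ := by
      rcases lt_or_eq_of_le hTs.1.2 with h | h
      · exact h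
      · exfalso; have := hTs.2; rw [h] at this; simp at this; linarith
    have hnegT : ∀ t ∈ Ioc T t₂, 𝓘 t < 0 := by
      intro t ht
      by_contra hle
      push_neg at hle
      have : t ∈ s := ⟨⟨hTs.1.1.trans ht.1.le, ht.2⟩, hle⟩
      exact absurd (le_csSup hsbdd this) (not_le.2 ht.1)
    have hmono : StrictMonoOn 𝓘 (Icc T t₂) := by
      apply strictMonoOn_of_deriv_pos (convex_Icc _ _)
        (hIc.mono (fun x hx => hTs.1.1.trans hx.1))
      intro x hx
      rw [interior_Icc] at hx
      have hxt₀ : t₀ ≤ x := hTs.1.1.trans hx.1.le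
      rw [(hD x hxt₀).deriv]
      exact hδ _ (by have := hupδ x hxt₀ hx.2; linarith) (hnegT x ⟨hx.1, hx.2.le⟩).le
    have := hmono (left_mem_Icc.2 hTt₂.le) (right_mem_Icc.2 hTt₂.le) hTt₂
    have hT0 : 0 ≤ 𝓘 T := hTs.2
    linarith
  -- monotonicity on [t₀, ∞)
  have hmono : MonotoneOn 𝓘 (Ici t₀) := by
    apply monotoneOn_of_deriv_nonneg (convex_Ici _) hIc
    · intro x hx
      rw [interior_Ici] at hx
      exact (hD x hx.le).differentiableAt.differentiableWithinAt
    · intro x hx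
      rw [interior_Ici] at hx
      rw [(hD x hx.le).deriv]
      have h1 := gFun_lower I₀ S₀ τ ν Iinf hS₀ hIinf hroot (hlo x hx.le) (hup x hx.le)
      have h2 : 𝓘 x / Iinf ≤ 1 := (div_le_one hIinf).2 (hup x hx.le)
      nlinarith
  -- the limit
  set w : ℝ → ℝ := fun t => 𝓘 (max t t₀) with hw
  have hwmono : Monotone w := fun a b hab =>
    hmono (mem_Ici.2 (le_max_right _ _)) (mem_Ici.2 (le_max_right _ _))
      (max_le_max hab (le_refl _))
  have hwbdd : BddAbove (range w) := by
    refine ⟨Iinf, fun y hy => ?_⟩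
    obtain ⟨t, rfl⟩ := hy
    exact hup _ (le_max_right _ _)
  have hwt : Tendsto w atTop (nhds (⨆ t, w t)) := tendsto_atTop_ciSup hwmono hwbdd
  set L := ⨆ t, w t with hL
  have hew : 𝓘 =ᶠ[atTop] w := by
    filter_upwards [eventually_ge_atTop t₀] with t ht
    simp [hw, max_eq_left ht]
  have htend : Tendsto 𝓘 atTop (nhds L) := hwt.congr' hew.symm
  have hLle : L ≤ Iinf := ciSup_le fun t => hup _ (le_max_right _ _)
  have hIle : ∀ t, t₀ ≤ t → 𝓘 t ≤ L := by
    intro t ht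
    have : 𝓘 t = w t := by simp [hw, max_eq_left ht]
    rw [this]
    exact le_ciSup hwbdd t
  have hL0 : 0 ≤ L := by
    have : w t₀ ≤ L := le_ciSup hwbdd t₀
    simp [hw, h0] at this
    linarith [hlo (max t₀ t₀) (le_max_right _ _), le_ciSup hwbdd t₀]
  -- show L = Iinf
  have hLeq : L = Iinf := by
    by_contra hne
    have hlt : L < Iinf := lt_of_le_of_ne hLle hne
    set m := (1 - L / Iinf) * I₀ with hm
    have hmpos : 0 < m := by
      have : L / Iinf < 1 := (div_lt_one hIinf).2 hlt
      have h1 : 0 < 1 - L / Iinf := by linarith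
      positivity
    have hgm : ∀ t, t₀ ≤ t → m ≤ g (𝓘 t) := by
      intro t ht
      have h1 := gFun_lower I₀ S₀ τ ν Iinf hS₀ hIinf hroot (hlo t ht) (hup t ht)
      have h2 : 𝓘 t / Iinf ≤ L / Iinf := by
        gcongr
        exact hIle t ht
      nlinarith
    -- 𝓘 grows at least linearly: contradiction
    set h : ℝ → ℝ := fun t => 𝓘 t - m * t with hh
    have hhmono : MonotoneOn h (Ici t₀) := by
      apply monotoneOn_of_deriv_nonneg (convex_Ici _)
      · exact (hIc.sub ((continuous_const.mul continuous_id).continuousOn))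
      · intro x hx
        rw [interior_Ici] at hx
        exact ((hD x hx.le).sub ((hasDerivAt_id x).const_mul m)).differentiableAt.differentiableWithinAt
      · intro x hx
        rw [interior_Ici] at hx
        have hd : HasDerivAt h (g (𝓘 x) - m) x := by
          have := (hD x hx.le).sub ((hasDerivAt_id x).const_mul m)
          rw [mul_one] at this; exact this
        rw [hd.deriv]
        linarith [hgm x hx.le]
    set t₃ := max t₀ (t₀ + (L + 1) / m) with ht₃
    have ht₃ge : t₀ ≤ t₃ := le_max_left _ _
    have hkey : h t₀ ≤ h t₃ := hhmono (mem_Ici.2 (le_refl _)) (mem_Ici.2 ht₃ge) ht₃ge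
    have ht₃ge' : t₀ + (L + 1) / m ≤ t₃ := le_max_right _ _
    have hgrow : L + 1 ≤ m * (t₃ - t₀) := by
      rw [← div_le_iff₀' hmpos]
      linarith
    have : 𝓘 t₃ ≤ L := hIle t₃ ht₃ge
    simp only [hh, h0] at hkey
    nlinarith
  rw [← hLeq]
  exact htend

/-- The final size equation `0 = I₀ + S₀(1 − exp(−τ x)) − ν x` has a unique
positive solution `𝓘∞ > 0`, and `𝓘∞` is the limit as `t → ∞` of the solution
of `𝓘' = I₀ + S₀(1 − exp(−τ 𝓘)) − ν 𝓘`, `𝓘 t₀ = 0`. -/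
theorem stmt_19 (I₀ S₀ τ ν t₀ : ℝ)
    (hI₀ : 0 < I₀) (hS₀ : 0 < S₀) (hτ : 0 < τ) (hν : 0 < ν) :
    ∃ Iinf : ℝ, 0 < Iinf ∧
      (I₀ + S₀ * (1 - Real.exp (-τ * Iinf)) - ν * Iinf = 0) ∧
      (∀ x : ℝ, 0 < x → I₀ + S₀ * (1 - Real.exp (-τ * x)) - ν * x = 0 → x = Iinf) ∧
      (∀ 𝓘 : ℝ → ℝ, 𝓘 t₀ = 0 →
        (∀ t : ℝ, t₀ ≤ t →
          HasDerivAt 𝓘 (I₀ + S₀ * (1 - Real.exp (-τ * 𝓘 t)) - ν * 𝓘 t) t) →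
        Tendsto 𝓘 atTop (nhds Iinf)) := by
  -- existence of the root via the intermediate value theorem
  set M := (I₀ + S₀ + 1) / ν with hM
  have hMpos : 0 < M := by positivity
  have hgM : gFun I₀ S₀ τ ν M < 0 := by
    have hνM : ν * M = I₀ + S₀ + 1 := by
      rw [hM, mul_div_cancel₀ _ hν.ne']
    have hexp := Real.exp_pos (-τ * M)
    unfold gFun
    nlinarith
  have hg0 : gFun I₀ S₀ τ ν 0 = I₀ := gFun_zero I₀ S₀ τ ν
  have hIVT := intermediate_value_Ioo' hMpos.le ((gFun_cont I₀ S₀ τ ν).continuousOn)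
  have h0mem : (0:ℝ) ∈ Ioo (gFun I₀ S₀ τ ν M) (gFun I₀ S₀ τ ν 0) := ⟨hgM, by rw [hg0]; exact hI₀⟩
  obtain ⟨Iinf, hImem, hroot⟩ := hIVT h0mem
  refine ⟨Iinf, hImem.1, ?_, ?_, ?_⟩
  · simpa [gFun] using hroot
  · -- uniqueness
    intro x hx hxeq
    have hxroot : gFun I₀ S₀ τ ν x = 0 := by simpa [gFun] using hxeq
    rcases lt_trichotomy x Iinf with h | h | h
    · exfalso
      have := gFun_lower I₀ S₀ τ ν Iinf hS₀ hImem.1 hroot hx.le h.le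
      rw [hxroot] at this
      have h2 : x / Iinf < 1 := (div_lt_one hImem.1).2 h
      nlinarith
    · exact h
    · exfalso
      have := gFun_neg I₀ S₀ τ ν Iinf hI₀ hS₀ hImem.1 hroot h
      rw [hxroot] at this
      exact lt_irrefl _ this
  · intro 𝓘 h𝓘0 hD
    exact tendsto_root I₀ S₀ τ ν t₀ Iinf hI₀ hS₀ hτ hν hImem.1 hroot 𝓘 h𝓘0
      (fun t ht => by simpa [gFun] using hD t ht)
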